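/- Let Γ be a group, let G be a subgroup of Γ, let H ≤ H′ be subgroups of Γ of finite index in Γ, and let g ∈ Γ. Then H and H′ are (g·G·g⁻¹)-equivalent, i.e. (g·G·g⁻¹)·H = (g·G·g⁻¹)·H′ as subsets of Γ, if and only if the number of right cosets of H contained in the double coset H·g·G equals [H′ : H] times the number of right cosets of H′ contained in the double coset H′·g·G. (Equivalently, the size of the orbit of the coset H·g under right multiplication by G equals [H′ : H] times the size of the orbit of the coset H′·g under right multiplication by G.) -/

import Mathlib

open Pointwise

section Helpers

variable {Γ : Type*} [Group Γ]

private lemma mem_coset_iff' (H : Subgroup Γ) (k x : Γ) :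
    x ∈ (H : Set Γ) * {k} ↔ x * k⁻¹ ∈ H := by
  simp only [Set.mem_mul, Set.mem_singleton_iff, SetLike.mem_coe]
  constructor
  · rintro ⟨h, hh, y, rfl, rfl⟩; simpa using hh
  · intro hx; exact ⟨x * k⁻¹, hx, k, rfl, by group⟩

private lemma coset_eq_iff' (H : Subgroup Γ) (k k' : Γ) :
    (H : Set Γ) * {k} = (H : Set Γ) * {k'} ↔ k * k'⁻¹ ∈ H := by
  constructor
  · intro h
    have : k ∈ (H : Set Γ) * {k'} := by
      rw [← h, mem_coset_iff']; simpa using H.one_mem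
    rwa [mem_coset_iff'] at this
  · intro hk; ext x
    rw [mem_coset_iff', mem_coset_iff']
    constructor
    · intro h
      have h2 : x * k⁻¹ * (k * k'⁻¹) ∈ H := H.mul_mem h hk
      have e : x * k⁻¹ * (k * k'⁻¹) = x * k'⁻¹ := by group
      rwa [e] at h2
    · intro h
      have h2 : x * k'⁻¹ * (k * k'⁻¹)⁻¹ ∈ H := H.mul_mem h (H.inv_mem hk)
      have e : x * k'⁻¹ * (k * k'⁻¹)⁻¹ = x * k⁻¹ := by group
      rwa [e] at h2

private lemma mem_dc' (H G : Subgroup Γ) (g x : Γ) :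
    x ∈ (H : Set Γ) * {g} * (G : Set Γ) ↔ ∃ h ∈ H, ∃ c ∈ G, h * g * c = x := by
  simp only [Set.mem_mul, Set.mem_singleton_iff, SetLike.mem_coe]
  constructor
  · rintro ⟨y, ⟨h, hh, z, rfl, rfl⟩, c, hc, rfl⟩; exact ⟨h, hh, c, hc, rfl⟩
  · rintro ⟨h, hh, c, hc, rfl⟩; exact ⟨h * g, ⟨h, hh, g, rfl, rfl⟩, c, hc, rfl⟩

private lemma count_eq' (G H : Subgroup Γ) (g : Γ) :
    Nat.card {C : Set Γ // (∃ k : Γ, C = (H : Set Γ) * {k}) ∧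
        C ⊆ (H : Set Γ) * {g} * (G : Set Γ)}
      = (H.comap (MulAut.conj g).toMonoidHom).relIndex G := by
  set N := (H.comap (MulAut.conj g).toMonoidHom).subgroupOf G with hN
  have hmem : ∀ γ : G, (H : Set Γ) * {g * (γ : Γ)⁻¹} ⊆ (H : Set Γ) * {g} * (G : Set Γ) := by
    intro γ x hx
    rw [mem_coset_iff'] at hx
    rw [mem_dc']
    exact ⟨x * (g * (γ : Γ)⁻¹)⁻¹, hx, (γ : Γ)⁻¹, G.inv_mem γ.2, by group⟩
  let F : G → {C : Set Γ // (∃ k : Γ, C = (H : Set Γ) * {k}) ∧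
      C ⊆ (H : Set Γ) * {g} * (G : Set Γ)} :=
    fun γ => ⟨(H : Set Γ) * {g * (γ : Γ)⁻¹}, ⟨_, rfl⟩, hmem γ⟩
  have hrel : ∀ γ₁ γ₂ : G, F γ₁ = F γ₂ ↔
      (γ₁ : Γ)⁻¹ * γ₂ ∈ H.comap (MulAut.conj g).toMonoidHom := by
    intro γ₁ γ₂
    rw [Subtype.ext_iff]
    show ((H : Set Γ) * {g * (γ₁ : Γ)⁻¹} = (H : Set Γ) * {g * (γ₂ : Γ)⁻¹}) ↔ _
    rw [coset_eq_iff', Subgroup.mem_comap]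
    have e : (g * (γ₁ : Γ)⁻¹) * (g * (γ₂ : Γ)⁻¹)⁻¹
        = g * ((γ₁ : Γ)⁻¹ * (γ₂ : Γ)) * g⁻¹ := by group
    rw [e]
    simp [MulAut.conj_apply]
  let F' : G ⧸ N → {C : Set Γ // (∃ k : Γ, C = (H : Set Γ) * {k}) ∧
      C ⊆ (H : Set Γ) * {g} * (G : Set Γ)} :=
    fun q => Quotient.liftOn' q F (fun γ₁ γ₂ h => by
      rw [QuotientGroup.leftRel_apply, hN, Subgroup.mem_subgroupOf] at h
      exact (hrel γ₁ γ₂).mpr (by simpa using h))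
  have hbij : Function.Bijective F' := by
    constructor
    · intro q₁ q₂
      refine Quotient.inductionOn₂' q₁ q₂ fun γ₁ γ₂ h => ?_
      have h' : F γ₁ = F γ₂ := h
      apply Quotient.sound'
      rw [QuotientGroup.leftRel_apply, hN, Subgroup.mem_subgroupOf]
      simpa using (hrel γ₁ γ₂).mp h'
    · rintro ⟨C, ⟨k, rfl⟩, hsub⟩
      have hk : k ∈ (H : Set Γ) * {g} * (G : Set Γ) := by
        apply hsub
        rw [mem_coset_iff']; simpa using H.one_mem
      rw [mem_dc'] at hk
      obtain ⟨h, hh, c, hc, rfl⟩ := hk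
      refine ⟨Quotient.mk'' ⟨c⁻¹, G.inv_mem hc⟩, ?_⟩
      have : F' (Quotient.mk'' ⟨c⁻¹, G.inv_mem hc⟩) = F ⟨c⁻¹, G.inv_mem hc⟩ := rfl
      rw [this]
      apply Subtype.ext
      show (H : Set Γ) * {g * (c⁻¹)⁻¹} = (H : Set Γ) * {h * g * c}
      rw [coset_eq_iff']
      have e : g * c⁻¹⁻¹ * (h * g * c)⁻¹ = h⁻¹ := by group
      rw [e]; exact H.inv_mem hh
  calc Nat.card {C : Set Γ // (∃ k : Γ, C = (H : Set Γ) * {k}) ∧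
        C ⊆ (H : Set Γ) * {g} * (G : Set Γ)}
      = Nat.card (G ⧸ N) := (Nat.card_eq_of_bijective F' hbij).symm
    _ = N.index := (Subgroup.index_eq_card N).symm
    _ = (H.comap (MulAut.conj g).toMonoidHom).relIndex G := rfl

private lemma relindex_inf_eq_iff' (A B C : Subgroup Γ) [hA : (A.subgroupOf B).FiniteIndex] :
    A.relIndex (B ⊓ C) = A.relIndex B ↔
      ∀ x ∈ B, ∃ y, y ∈ B ∧ y ∈ C ∧ y⁻¹ * x ∈ A := by
  let φ : ↥(B ⊓ C) ⧸ (A.subgroupOf (B ⊓ C)) → ↥B ⧸ (A.subgroupOf B) :=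
    Quotient.map' (fun y => ⟨(y : Γ), (Subgroup.mem_inf.mp y.2).1⟩)
      (fun y₁ y₂ h => by
        rw [QuotientGroup.leftRel_apply, Subgroup.mem_subgroupOf] at h
        rw [QuotientGroup.leftRel_apply, Subgroup.mem_subgroupOf]
        simpa using h)
  have hinj : Function.Injective φ := by
    intro q₁ q₂
    refine Quotient.inductionOn₂' q₁ q₂ fun y₁ y₂ h => ?_
    simp only [φ, Quotient.map'_mk''] at h
    have h' := Quotient.exact' h
    rw [QuotientGroup.leftRel_apply, Subgroup.mem_subgroupOf] at h'
    apply Quotient.sound'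
    rw [QuotientGroup.leftRel_apply, Subgroup.mem_subgroupOf]
    simpa using h'
  have hcard₁ : A.relIndex (B ⊓ C) = Nat.card (↥(B ⊓ C) ⧸ (A.subgroupOf (B ⊓ C))) :=
    Subgroup.index_eq_card _
  have hcard₂ : A.relIndex B = Nat.card (↥B ⧸ (A.subgroupOf B)) :=
    Subgroup.index_eq_card _
  haveI : Finite (↥B ⧸ (A.subgroupOf B)) := Subgroup.finite_quotient_of_finiteIndex
  constructor
  · intro hcd x hx
    have hbij : Function.Bijective φ :=
      (Nat.bijective_iff_injective_and_card φ).mpr ⟨hinj, by rw [← hcard₁, ← hcard₂, hcd]⟩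
    obtain ⟨q, hq⟩ := hbij.2 (Quotient.mk'' ⟨x, hx⟩)
    revert hq
    refine Quotient.inductionOn' q fun y hq => ?_
    simp only [φ, Quotient.map'_mk''] at hq
    have h' := Quotient.exact' hq
    rw [QuotientGroup.leftRel_apply, Subgroup.mem_subgroupOf] at h'
    exact ⟨(y : Γ), (Subgroup.mem_inf.mp y.2).1, (Subgroup.mem_inf.mp y.2).2, by simpa using h'⟩
  · intro hcond
    have hsurj : Function.Surjective φ := by
      intro q
      refine Quotient.inductionOn' q fun x => ?_
      obtain ⟨y, hyB, hyC, hyA⟩ := hcond x x.2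
      refine ⟨Quotient.mk'' ⟨y, Subgroup.mem_inf.mpr ⟨hyB, hyC⟩⟩, ?_⟩
      simp only [φ, Quotient.map'_mk'']
      apply Quotient.sound'
      rw [QuotientGroup.leftRel_apply, Subgroup.mem_subgroupOf]
      simpa using hyA
    rw [hcard₁, hcard₂]
    exact Nat.card_eq_of_bijective φ ⟨hinj, hsurj⟩

end Helpers

/-- Let `G` be a subgroup of `Γ`, `H ≤ H'` subgroups of finite index in
`Γ`, and `g ∈ Γ`. Then `H` and `H'` are `(g·G·g⁻¹)`-equivalent, i.e.
`(g·G·g⁻¹)·H = (g·G·g⁻¹)·H'`, if and only if the number of right cosets of `H` contained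
in the double coset `H·g·G` equals `[H' : H]` times the number of right cosets of `H'`
contained in the double coset `H'·g·G`. -/
theorem equivalent_degree_formula {Γ : Type*} [Group Γ] (G H H' : Subgroup Γ)
    (hHH' : H ≤ H') [H.FiniteIndex] [H'.FiniteIndex] (g : Γ) :
    ({g} * (G : Set Γ) * {g⁻¹}) * (H : Set Γ)
        = ({g} * (G : Set Γ) * {g⁻¹}) * (H' : Set Γ) ↔
      Nat.card {C : Set Γ // (∃ k : Γ, C = (H : Set Γ) * {k}) ∧
          C ⊆ (H : Set Γ) * {g} * (G : Set Γ)}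
        = H.relIndex H' *
          Nat.card {C : Set Γ // (∃ k : Γ, C = (H' : Set Γ) * {k}) ∧
            C ⊆ (H' : Set Γ) * {g} * (G : Set Γ)} := by
  have hσs : Function.Surjective (MulAut.conj g).toMonoidHom := (MulAut.conj g).surjective
  have memHc : ∀ x : Γ, x ∈ H.comap (MulAut.conj g).toMonoidHom ↔ g * x * g⁻¹ ∈ H := by
    intro x; simp [Subgroup.mem_comap]
  have memH'c : ∀ x : Γ, x ∈ H'.comap (MulAut.conj g).toMonoidHom ↔ g * x * g⁻¹ ∈ H' := by
    intro x; simp [Subgroup.mem_comap]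
  have memK : ∀ x : Γ, x ∈ ({g} * (G : Set Γ) * {g⁻¹}) ↔ g⁻¹ * x * g ∈ G := by
    intro x
    simp only [Set.singleton_mul, Set.mul_singleton, Set.image_image, Set.mem_image,
      SetLike.mem_coe]
    constructor
    · rintro ⟨a, ha, rfl⟩
      have e : g⁻¹ * (g * a * g⁻¹) * g = a := by group
      rwa [e]
    · intro hx
      exact ⟨g⁻¹ * x * g, hx, by group⟩
  haveI hHcFI : (H.comap (MulAut.conj g).toMonoidHom).FiniteIndex := by
    constructor
    rw [Subgroup.index_comap_of_surjective (H := H) hσs]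
    exact Subgroup.FiniteIndex.index_ne_zero
  haveI hH'cFI : (H'.comap (MulAut.conj g).toMonoidHom).FiniteIndex := by
    constructor
    rw [Subgroup.index_comap_of_surjective (H := H') hσs]
    exact Subgroup.FiniteIndex.index_ne_zero
  have hle : H.comap (MulAut.conj g).toMonoidHom ≤ H'.comap (MulAut.conj g).toMonoidHom :=
    Subgroup.comap_mono hHH'
  have hb : (H.comap (MulAut.conj g).toMonoidHom).relIndex (H'.comap (MulAut.conj g).toMonoidHom)
      = H.relIndex H' := by
    rw [Subgroup.relIndex_comap, Subgroup.map_comap_eq_self_of_surjective hσs]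
  have h1 : (H.comap (MulAut.conj g).toMonoidHom) ⊓ ((H'.comap (MulAut.conj g).toMonoidHom) ⊓ G)
      = (H.comap (MulAut.conj g).toMonoidHom) ⊓ G := by
    rw [← inf_assoc, inf_of_le_left hle]
  have key : (H.comap (MulAut.conj g).toMonoidHom).relIndex
        ((H'.comap (MulAut.conj g).toMonoidHom) ⊓ G)
        * (H'.comap (MulAut.conj g).toMonoidHom).relIndex G
      = (H.comap (MulAut.conj g).toMonoidHom).relIndex G := by
    rw [← Subgroup.inf_relIndex_right (H.comap (MulAut.conj g).toMonoidHom)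
        ((H'.comap (MulAut.conj g).toMonoidHom) ⊓ G),
      ← Subgroup.inf_relIndex_right (H'.comap (MulAut.conj g).toMonoidHom) G,
      ← Subgroup.inf_relIndex_right (H.comap (MulAut.conj g).toMonoidHom) G,
      Subgroup.relIndex_mul_relIndex _ _ G (by rw [h1]; exact inf_le_inf_right _ hle)
        inf_le_right, h1]
  have hc0 : (H'.comap (MulAut.conj g).toMonoidHom).relIndex G ≠ 0 :=
    Subgroup.FiniteIndex.index_ne_zero
      (H := (H'.comap (MulAut.conj g).toMonoidHom).subgroupOf G)
  rw [count_eq' G H g, count_eq' G H' g, ← key, ← hb, Nat.mul_left_inj hc0,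
    relindex_inf_eq_iff']
  constructor
  · intro hset x hx
    have hx' : g * x * g⁻¹ ∈ H' := (memH'c x).mp hx
    have h1K : (1 : Γ) ∈ ({g} * (G : Set Γ) * {g⁻¹}) := by
      rw [memK]; simpa using G.one_mem
    have hmm : (g * x * g⁻¹) ∈ ({g} * (G : Set Γ) * {g⁻¹}) * (H : Set Γ) := by
      rw [hset]
      exact Set.mem_mul.mpr ⟨1, h1K, g * x * g⁻¹, hx', one_mul _⟩
    obtain ⟨k, hk, h, hh, hkh⟩ := Set.mem_mul.mp hmm
    rw [memK] at hk
    refine ⟨g⁻¹ * k * g, ?_, hk, ?_⟩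
    · rw [memH'c]
      have e : g * (g⁻¹ * k * g) * g⁻¹ = k := by group
      have hkval : k = (g * x * g⁻¹) * h⁻¹ := by rw [← hkh]; group
      rw [e, hkval]
      exact H'.mul_mem hx' (H'.inv_mem (hHH' hh))
    · rw [memHc]
      have e : g * ((g⁻¹ * k * g)⁻¹ * x) * g⁻¹ = k⁻¹ * (g * x * g⁻¹) := by group
      have e2 : k⁻¹ * (g * x * g⁻¹) = h := by rw [← hkh]; group
      rw [e, e2]
      exact hh
  · intro hcond
    apply Set.Subset.antisymm
    · exact Set.mul_subset_mul_left (fun x hx => hHH' hx)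
    · intro x hx
      obtain ⟨k, hk, h', hh', rfl⟩ := Set.mem_mul.mp hx
      rw [memK] at hk
      have hmem : g⁻¹ * h' * g ∈ H'.comap (MulAut.conj g).toMonoidHom := by
        rw [memH'c]
        have e : g * (g⁻¹ * h' * g) * g⁻¹ = h' := by group
        rwa [e]
      obtain ⟨y, hyH', hyG, hyA⟩ := hcond _ hmem
      have hH : g * (y⁻¹ * (g⁻¹ * h' * g)) * g⁻¹ ∈ H := (memHc _).mp hyA
      refine Set.mem_mul.mpr ⟨k * (g * y * g⁻¹), ?_,
        g * (y⁻¹ * (g⁻¹ * h' * g)) * g⁻¹, hH, ?_⟩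
      · rw [memK]
        have e : g⁻¹ * (k * (g * y * g⁻¹)) * g = (g⁻¹ * k * g) * y := by group
        rw [e]
        exact G.mul_mem hk hyG
      · group
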